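/- Let U and V be finite nonempty sets and let P : U × V → ℝ satisfy P(u,v) ≥ 0 for all u, v and Σ_{v∈V} P(u,v) = 1 for every u ∈ U. Define r̄(v) = Σ_{u∈U} P(u,v). Call a function f : U → V feasible if P(u, f(u)) > 0 for every u ∈ U, and for feasible f let r_f(v) = |{u ∈ U : f(u) = v}|. If f* is feasible and minimizes Σ_{v∈V} (r_f(v) − r̄(v))² over all feasible f, then for every v ∈ V, ⌊r̄(v)⌋ ≤ r_{f*}(v) ≤ ⌈r̄(v)⌉. -/

import Mathlib

open Finset

set_option linter.unusedSectionVars false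

namespace Stmt11

variable {U V : Type*} [Fintype U] [Fintype V] [DecidableEq U] [DecidableEq V]

/-- count of tuples assigned to `v` -/
def cnt (f : U → V) (v : V) : ℕ := (Finset.univ.filter fun u => f u = v).card

/-- paths of length `n` in the move graph of `f`: an edge from `x` to `y` exists
when some tuple `u` currently at `x` could move to `y`. -/
def pathN (P : U → V → ℝ) : ℕ → (U → V) → V → V → Prop
  | 0, _, x, w => x = w
  | n+1, f, x, w => x = w ∨ ∃ y u, f u = x ∧ 0 < P u y ∧ pathN P n f y w

lemma pathN_refl (P : U → V → ℝ) (n : ℕ) (f : U → V) (x : V) : pathN P n f x x := by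
  cases n <;> simp [pathN]

lemma pathN_snoc {P : U → V → ℝ} {n : ℕ} {f : U → V} {x w : V} (h : pathN P n f x w)
    {u : U} {b : V} (hu : f u = w) (hb : 0 < P u b) : pathN P (n+1) f x b := by
  induction n generalizing x with
  | zero => exact Or.inr ⟨b, u, by rw [hu, h], hb, rfl⟩
  | succ n ih =>
    rcases h with rfl | ⟨y, u', h1, h2, h3⟩
    · exact Or.inr ⟨b, u, hu, hb, pathN_refl _ _ _ _⟩
    · exact Or.inr ⟨y, u', h1, h2, ih h3⟩

lemma cnt_update (f : U → V) (u : U) (y : V) (v : V) :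
    (cnt (Function.update f u y) v : ℤ) =
      (cnt f v : ℤ) + (if v = y then 1 else 0) - (if v = f u then 1 else 0) := by
  unfold cnt
  rw [Finset.card_filter, Finset.card_filter]
  push_cast
  rw [← Finset.sum_erase_add _ _ (Finset.mem_univ u),
      ← Finset.sum_erase_add _ _ (Finset.mem_univ u)]
  have h : ∀ u' ∈ Finset.univ.erase u,
      (if Function.update f u y u' = v then (1:ℤ) else 0) = (if f u' = v then 1 else 0) := by
    intro u' hu'
    rw [Function.update_of_ne (Finset.ne_of_mem_erase hu')]
  rw [Finset.sum_congr rfl h, Function.update_self]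
  have h1 : (if y = v then (1:ℤ) else 0) = (if v = y then 1 else 0) := by simp [eq_comm]
  have h2 : (if f u = v then (1:ℤ) else 0) = (if v = f u then 1 else 0) := by simp [eq_comm]
  rw [h1, h2]; ring

/-- Surgery on a path when one tuple `u` is re-assigned:
either the path survives with `u` moved anywhere, or we can restart the path at
some group `b` admissible for `u`. -/
lemma pathN_update (P : U → V → ℝ) :
    ∀ (n : ℕ) (f : U → V) (u : U) (z w : V), pathN P n f z w →
      (∀ y, ∃ m ≤ n, pathN P m (Function.update f u y) z w) ∨
      (∃ b, 0 < P u b ∧ ∃ m < n, pathN P m (Function.update f u b) b w) := by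
  intro n
  induction n with
  | zero =>
    intro f u z w h
    exact Or.inl fun y => ⟨0, le_rfl, h⟩
  | succ n ih =>
    intro f u z w h
    rcases h with rfl | ⟨c, u', h1, h2, h3⟩
    · exact Or.inl fun y => ⟨0, Nat.zero_le _, rfl⟩
    · by_cases hu : u' = u
      · subst hu
        rcases ih f u' c w h3 with h4 | ⟨b, hb1, m, hm, hb2⟩
        · obtain ⟨m, hm, hp⟩ := h4 c
          exact Or.inr ⟨c, h2, m, Nat.lt_succ_of_le hm, hp⟩
        · exact Or.inr ⟨b, hb1, m, hm.trans (Nat.lt_succ_self n), hb2⟩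
      · rcases ih f u c w h3 with h4 | ⟨b, hb1, m, hm, hb2⟩
        · refine Or.inl fun y => ?_
          obtain ⟨m, hm, hp⟩ := h4 y
          exact ⟨m+1, Nat.succ_le_succ hm,
            Or.inr ⟨c, u', by rw [Function.update_of_ne hu]; exact h1, h2, hp⟩⟩
        · exact Or.inr ⟨b, hb1, m, hm.trans (Nat.lt_succ_self n), hb2⟩

/-- Along a path from `x` to `w` one can shift one unit of count from `x` to `w`
while preserving feasibility. -/
lemma move (P : U → V → ℝ) :
    ∀ (n : ℕ) (f : U → V), (∀ u, 0 < P u (f u)) → ∀ x w, pathN P n f x w →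
      ∃ g : U → V, (∀ u, 0 < P u (g u)) ∧ ∀ v, (cnt g v : ℤ) =
        (cnt f v : ℤ) + (if v = w then 1 else 0) - (if v = x then 1 else 0) := by
  intro n
  induction n using Nat.strong_induction_on with
  | _ n ih =>
    intro f hf x w hp
    rcases n with _ | n
    · have hxw : x = w := hp
      subst hxw; exact ⟨f, hf, fun v => by ring⟩
    · have hp' : x = w ∨ ∃ y u, f u = x ∧ 0 < P u y ∧ pathN P n f y w := hp
      rcases hp' with rfl | ⟨y, u, h1, h2, h3⟩
      · exact ⟨f, hf, fun v => by ring⟩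
      subst h1
      rcases pathN_update P n f u y w h3 with h4 | ⟨b, hb1, m, hm, hp'⟩
      · obtain ⟨m, hm, hp'⟩ := h4 y
        have hf1 : ∀ u', 0 < P u' (Function.update f u y u') := by
          intro u'
          by_cases h : u' = u
          · subst h; rw [Function.update_self]; exact h2
          · rw [Function.update_of_ne h]; exact hf u'
        obtain ⟨g, hg, hcg⟩ := ih m (Nat.lt_succ_of_le hm) (Function.update f u y) hf1 y w hp'
        refine ⟨g, hg, fun v => ?_⟩
        have e1 := hcg v
        have e2 := cnt_update f u y v
        rw [e2] at e1
        linarith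
      · have hf2 : ∀ u', 0 < P u' (Function.update f u b u') := by
          intro u'
          by_cases h : u' = u
          · subst h; rw [Function.update_self]; exact hb1
          · rw [Function.update_of_ne h]; exact hf u'
        obtain ⟨g, hg, hcg⟩ := ih m (hm.trans (Nat.lt_succ_self n)) (Function.update f u b) hf2 b w hp'
        refine ⟨g, hg, fun v => ?_⟩
        have e1 := hcg v
        have e2 := cnt_update f u b v
        rw [e2] at e1
        linarith

/-- If `v0` has a surplus of at least 1, some group with a deficit is reachable from it. -/
lemma reach_deficit (P : U → V → ℝ) (hP0 : ∀ u v, 0 ≤ P u v) (hP1 : ∀ u, ∑ v : V, P u v = 1)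
    (f : U → V) (v0 : V)
    (hd : 1 ≤ (cnt f v0 : ℝ) - ∑ u : U, P u v0) :
    ∃ w, (∃ n, pathN P n f v0 w) ∧ (cnt f w : ℝ) - (∑ u : U, P u w) < 0 := by
  classical
  by_contra hcon
  push_neg at hcon
  set R : Finset V := Finset.univ.filter (fun w => ∃ n, pathN P n f v0 w) with hR
  have hv0R : v0 ∈ R := by
    simp only [hR, Finset.mem_filter, Finset.mem_univ, true_and]
    exact ⟨0, rfl⟩
  have hclosed : ∀ w ∈ R, ∀ (u : U) (b : V), f u = w → 0 < P u b → b ∈ R := by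
    intro w hw u b hu hb
    simp only [hR, Finset.mem_filter, Finset.mem_univ, true_and] at hw ⊢
    obtain ⟨n, hp⟩ := hw
    exact ⟨n+1, pathN_snoc hp hu hb⟩
  set A : Finset U := Finset.univ.filter (fun u => f u ∈ R) with hA
  have hcard : ∑ w ∈ R, (cnt f w : ℝ) = (A.card : ℝ) := by
    have h1 : A.card = ∑ w ∈ R, (A.filter fun u => f u = w).card :=
      Finset.card_eq_sum_card_fiberwise (by
        intro u hu
        simpa only [hA, Finset.mem_coe, Finset.mem_filter, Finset.mem_univ, true_and] using hu)
    have h2 : ∀ w ∈ R, (A.filter fun u => f u = w) = Finset.univ.filter fun u => f u = w := by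
      intro w hw
      ext u
      simp only [hA, Finset.mem_filter, Finset.mem_univ, true_and]
      constructor
      · rintro ⟨_, h⟩; exact h
      · intro h; exact ⟨h ▸ hw, h⟩
    rw [h1]
    push_cast
    refine Finset.sum_congr rfl ?_
    intro w hw
    rw [h2 w hw]
    rfl
  have hmean : (A.card : ℝ) ≤ ∑ w ∈ R, ∑ u : U, P u w := by
    rw [Finset.sum_comm]
    have h3 : ∀ u ∈ A, ∑ w ∈ R, P u w = 1 := by
      intro u hu
      have hfu : f u ∈ R := by
        simpa only [hA, Finset.mem_filter, Finset.mem_univ, true_and] using hu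
      rw [← hP1 u]
      refine Finset.sum_subset (Finset.subset_univ R) ?_
      intro w _ hw
      by_contra hne
      have : 0 < P u w := lt_of_le_of_ne (hP0 u w) (Ne.symm hne)
      exact hw (hclosed _ hfu u w rfl this)
    calc (A.card : ℝ) = ∑ u ∈ A, (1:ℝ) := by simp
      _ = ∑ u ∈ A, ∑ w ∈ R, P u w := Finset.sum_congr rfl (fun u hu => (h3 u hu).symm)
      _ ≤ ∑ u : U, ∑ w ∈ R, P u w := by
          refine Finset.sum_le_sum_of_subset_of_nonneg (Finset.subset_univ A) ?_
          intro u _ _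
          exact Finset.sum_nonneg fun w _ => hP0 u w
  have hterms : ∀ w ∈ R, 0 ≤ (cnt f w : ℝ) - ∑ u : U, P u w := by
    intro w hw
    simp only [hR, Finset.mem_filter, Finset.mem_univ, true_and] at hw
    exact hcon w hw
  have hgt : (1:ℝ) ≤ ∑ w ∈ R, ((cnt f w : ℝ) - ∑ u : U, P u w) :=
    le_trans hd (Finset.single_le_sum hterms hv0R)
  have hsum : ∑ w ∈ R, ((cnt f w : ℝ) - ∑ u : U, P u w) ≤ 0 := by
    rw [Finset.sum_sub_distrib, hcard]
    linarith [hmean]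
  linarith

/-- If `v0` has a deficit of at least 1, some group with a surplus can reach it. -/
lemma reach_surplus (P : U → V → ℝ) (hP0 : ∀ u v, 0 ≤ P u v) (hP1 : ∀ u, ∑ v : V, P u v = 1)
    (f : U → V) (v0 : V)
    (hd : (cnt f v0 : ℝ) - (∑ u : U, P u v0) ≤ -1) :
    ∃ w, (∃ n, pathN P n f w v0) ∧ 0 < (cnt f w : ℝ) - ∑ u : U, P u w := by
  classical
  by_contra hcon
  push_neg at hcon
  set R : Finset V := Finset.univ.filter (fun w => ∃ n, pathN P n f w v0) with hR
  have hv0R : v0 ∈ R := by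
    simp only [hR, Finset.mem_filter, Finset.mem_univ, true_and]
    exact ⟨0, rfl⟩
  have hclosed : ∀ b ∈ R, ∀ (u : U), 0 < P u b → f u ∈ R := by
    intro b hb u hub
    simp only [hR, Finset.mem_filter, Finset.mem_univ, true_and] at hb ⊢
    obtain ⟨n, hp⟩ := hb
    exact ⟨n+1, Or.inr ⟨b, u, rfl, hub, hp⟩⟩
  set A' : Finset U := Finset.univ.filter (fun u => ∃ b ∈ R, 0 < P u b) with hA'
  set A : Finset U := Finset.univ.filter (fun u => f u ∈ R) with hA
  have hsub : A' ⊆ A := by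
    intro u hu
    simp only [hA', Finset.mem_filter, Finset.mem_univ, true_and] at hu
    obtain ⟨b, hbR, hb⟩ := hu
    simp only [hA, Finset.mem_filter, Finset.mem_univ, true_and]
    exact hclosed b hbR u hb
  have hcard : ∑ w ∈ R, (cnt f w : ℝ) = (A.card : ℝ) := by
    have h1 : A.card = ∑ w ∈ R, (A.filter fun u => f u = w).card :=
      Finset.card_eq_sum_card_fiberwise (by
        intro u hu
        simpa only [hA, Finset.mem_coe, Finset.mem_filter, Finset.mem_univ, true_and] using hu)
    have h2 : ∀ w ∈ R, (A.filter fun u => f u = w) = Finset.univ.filter fun u => f u = w := by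
      intro w hw
      ext u
      simp only [hA, Finset.mem_filter, Finset.mem_univ, true_and]
      constructor
      · rintro ⟨_, h⟩; exact h
      · intro h; exact ⟨h ▸ hw, h⟩
    rw [h1]
    push_cast
    refine Finset.sum_congr rfl ?_
    intro w hw
    rw [h2 w hw]
    rfl
  have hmean : ∑ w ∈ R, ∑ u : U, P u w ≤ (A'.card : ℝ) := by
    rw [Finset.sum_comm]
    have hsplit := Finset.sum_filter_add_sum_filter_not Finset.univ
      (fun u => ∃ b ∈ R, 0 < P u b) (fun u => ∑ w ∈ R, P u w)
    have hz : ∑ u ∈ Finset.univ.filter (fun u => ¬ ∃ b ∈ R, 0 < P u b),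
        (∑ w ∈ R, P u w) = 0 := by
      refine Finset.sum_eq_zero ?_
      intro u hu
      simp only [Finset.mem_filter, Finset.mem_univ, true_and] at hu
      push_neg at hu
      refine Finset.sum_eq_zero ?_
      intro w hw
      exact le_antisymm (hu w hw) (hP0 u w)
    have hone : ∑ u ∈ A', (∑ w ∈ R, P u w) ≤ (A'.card : ℝ) := by
      have hle1 : ∀ u ∈ A', ∑ w ∈ R, P u w ≤ 1 := by
        intro u _
        rw [← hP1 u]
        exact Finset.sum_le_sum_of_subset_of_nonneg (Finset.subset_univ R)
          (fun w _ _ => hP0 u w)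
      calc ∑ u ∈ A', (∑ w ∈ R, P u w) ≤ ∑ u ∈ A', (1:ℝ) := Finset.sum_le_sum hle1
        _ = A'.card := by simp
    calc ∑ u : U, ∑ w ∈ R, P u w
        = ∑ u ∈ A', (∑ w ∈ R, P u w) + ∑ u ∈ Finset.univ.filter (fun u => ¬ ∃ b ∈ R, 0 < P u b),
            (∑ w ∈ R, P u w) := by rw [hsplit]
      _ = ∑ u ∈ A', (∑ w ∈ R, P u w) := by rw [hz, add_zero]
      _ ≤ (A'.card : ℝ) := hone
  have hterms : ∀ w ∈ R, (cnt f w : ℝ) - (∑ u : U, P u w) ≤ 0 := by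
    intro w hw
    simp only [hR, Finset.mem_filter, Finset.mem_univ, true_and] at hw
    exact hcon w hw
  have hle : ∑ w ∈ R, ((cnt f w : ℝ) - ∑ u : U, P u w) ≤ -1 := by
    rw [← Finset.add_sum_erase _ _ hv0R]
    have : ∑ w ∈ R.erase v0, ((cnt f w : ℝ) - ∑ u : U, P u w) ≤ 0 :=
      Finset.sum_nonpos (fun w hw => hterms w (Finset.mem_of_mem_erase hw))
    linarith
  have hge : (0:ℝ) ≤ ∑ w ∈ R, ((cnt f w : ℝ) - ∑ u : U, P u w) := by
    rw [Finset.sum_sub_distrib, hcard]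
    have : (A'.card : ℝ) ≤ (A.card : ℝ) := by exact_mod_cast Finset.card_le_card hsub
    linarith [hmean]
  linarith

lemma cost_lt (rb c1 c2 : V → ℝ) (x w : V) (hxw : x ≠ w)
    (hx : c2 x = c1 x - 1) (hw : c2 w = c1 w + 1)
    (ho : ∀ v, v ≠ x → v ≠ w → c2 v = c1 v)
    (hsum : (c1 w - rb w) + 1 < c1 x - rb x) :
    ∑ v : V, (c2 v - rb v)^2 < ∑ v : V, (c1 v - rb v)^2 := by
  have key : ∑ v : V, ((c2 v - rb v)^2 - (c1 v - rb v)^2) < 0 := by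
    have hzero : ∑ v ∈ ({x, w} : Finset V), ((c2 v - rb v)^2 - (c1 v - rb v)^2)
        = ∑ v : V, ((c2 v - rb v)^2 - (c1 v - rb v)^2) := by
      refine Finset.sum_subset (Finset.subset_univ _) ?_
      intro v _ hv
      simp only [Finset.mem_insert, Finset.mem_singleton] at hv
      push_neg at hv
      rw [ho v hv.1 hv.2]
      ring
    rw [← hzero, Finset.sum_pair hxw, hx, hw]
    nlinarith [hsum]
  have hdist : ∑ v : V, ((c2 v - rb v)^2 - (c1 v - rb v)^2)
      = ∑ v : V, (c2 v - rb v)^2 - ∑ v : V, (c1 v - rb v)^2 := Finset.sum_sub_distrib _ _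
  linarith

end Stmt11


/-- Let `U, V` be finite nonempty sets and `P : U × V → ℝ` nonnegative with
rows summing to 1.  With `r̄(v) = Σ_u P(u,v)`, a function `f : U → V` feasible when
`P(u, f u) > 0` for all `u`, and `r_f(v) = |{u : f u = v}|`, if the feasible `f*` minimizes
`Σ_v (r_f(v) − r̄(v))²` over all feasible `f`, then `⌊r̄(v)⌋ ≤ r_{f*}(v) ≤ ⌈r̄(v)⌉`
for every `v`. -/
theorem stmt_11 {U V : Type*} [Fintype U] [Fintype V] [DecidableEq U] [DecidableEq V]
    [Nonempty U] [Nonempty V]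
    (P : U → V → ℝ) (hP0 : ∀ u v, 0 ≤ P u v) (hP1 : ∀ u, ∑ v : V, P u v = 1)
    (fstar : U → V) (hfeas : ∀ u, 0 < P u (fstar u))
    (hmin : ∀ f : U → V, (∀ u, 0 < P u (f u)) →
      (∑ v : V, (((Finset.univ.filter fun u => fstar u = v).card : ℝ) - ∑ u : U, P u v) ^ 2)
        ≤ ∑ v : V, (((Finset.univ.filter fun u => f u = v).card : ℝ) - ∑ u : U, P u v) ^ 2) :
    ∀ v : V,
      ((⌊∑ u : U, P u v⌋ : ℝ) ≤ ((Finset.univ.filter fun u => fstar u = v).card : ℝ)) ∧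
      (((Finset.univ.filter fun u => fstar u = v).card : ℝ) ≤ (⌈∑ u : U, P u v⌉ : ℝ)) := by
  classical
  intro v
  constructor
  · -- lower bound
    by_contra hlt
    push_neg at hlt
    have hz : (Stmt11.cnt fstar v : ℤ) < ⌊∑ u : U, P u v⌋ := by exact_mod_cast hlt
    have hR : (Stmt11.cnt fstar v : ℝ) + 1 ≤ ((⌊∑ u : U, P u v⌋ : ℤ) : ℝ) := by
      exact_mod_cast hz
    have hfl := Int.floor_le (∑ u : U, P u v)
    have hd : (Stmt11.cnt fstar v : ℝ) - (∑ u : U, P u v) ≤ -1 := by linarith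
    obtain ⟨w, ⟨n, hpath⟩, hwpos⟩ := Stmt11.reach_surplus P hP0 hP1 fstar v hd
    obtain ⟨g, hgfeas, hgcnt⟩ := Stmt11.move P n fstar hfeas w v hpath
    have hwv : w ≠ v := by
      rintro rfl; linarith
    have hx : ((Stmt11.cnt g w : ℕ) : ℝ) = ((Stmt11.cnt fstar w : ℕ) : ℝ) - 1 := by
      have h := hgcnt w
      rw [if_neg hwv, if_pos rfl] at h
      have : (Stmt11.cnt g w : ℤ) = (Stmt11.cnt fstar w : ℤ) - 1 := by linarith
      exact_mod_cast this
    have hw' : ((Stmt11.cnt g v : ℕ) : ℝ) = ((Stmt11.cnt fstar v : ℕ) : ℝ) + 1 := by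
      have h := hgcnt v
      rw [if_pos rfl, if_neg (Ne.symm hwv)] at h
      have : (Stmt11.cnt g v : ℤ) = (Stmt11.cnt fstar v : ℤ) + 1 := by linarith
      exact_mod_cast this
    have ho : ∀ v', v' ≠ w → v' ≠ v →
        ((Stmt11.cnt g v' : ℕ) : ℝ) = ((Stmt11.cnt fstar v' : ℕ) : ℝ) := by
      intro v' h1 h2
      have h := hgcnt v'
      rw [if_neg h2, if_neg h1] at h
      have : (Stmt11.cnt g v' : ℤ) = (Stmt11.cnt fstar v' : ℤ) := by linarith
      exact_mod_cast this
    have hlt' := Stmt11.cost_lt (fun w => ∑ u : U, P u w)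
      (fun w => ((Stmt11.cnt fstar w : ℕ) : ℝ)) (fun w => ((Stmt11.cnt g w : ℕ) : ℝ))
      w v hwv hx hw' ho (by linarith)
    have hmin' := hmin g hgfeas
    simp only [Stmt11.cnt] at hlt'
    linarith
  · -- upper bound
    by_contra hgt
    push_neg at hgt
    have hz : ⌈∑ u : U, P u v⌉ < (Stmt11.cnt fstar v : ℤ) := by exact_mod_cast hgt
    have hR : ((⌈∑ u : U, P u v⌉ : ℤ) : ℝ) + 1 ≤ (Stmt11.cnt fstar v : ℝ) := by
      exact_mod_cast hz
    have hcl := Int.le_ceil (∑ u : U, P u v)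
    have hd : 1 ≤ (Stmt11.cnt fstar v : ℝ) - ∑ u : U, P u v := by linarith
    obtain ⟨w, ⟨n, hpath⟩, hwneg⟩ := Stmt11.reach_deficit P hP0 hP1 fstar v hd
    obtain ⟨g, hgfeas, hgcnt⟩ := Stmt11.move P n fstar hfeas v w hpath
    have hvw : v ≠ w := by
      rintro rfl; linarith
    have hx : ((Stmt11.cnt g v : ℕ) : ℝ) = ((Stmt11.cnt fstar v : ℕ) : ℝ) - 1 := by
      have h := hgcnt v
      rw [if_neg hvw, if_pos rfl] at h
      have : (Stmt11.cnt g v : ℤ) = (Stmt11.cnt fstar v : ℤ) - 1 := by linarith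
      exact_mod_cast this
    have hw' : ((Stmt11.cnt g w : ℕ) : ℝ) = ((Stmt11.cnt fstar w : ℕ) : ℝ) + 1 := by
      have h := hgcnt w
      rw [if_pos rfl, if_neg (Ne.symm hvw)] at h
      have : (Stmt11.cnt g w : ℤ) = (Stmt11.cnt fstar w : ℤ) + 1 := by linarith
      exact_mod_cast this
    have ho : ∀ v', v' ≠ v → v' ≠ w →
        ((Stmt11.cnt g v' : ℕ) : ℝ) = ((Stmt11.cnt fstar v' : ℕ) : ℝ) := by
      intro v' h1 h2
      have h := hgcnt v'
      rw [if_neg h2, if_neg h1] at h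
      have : (Stmt11.cnt g v' : ℤ) = (Stmt11.cnt fstar v' : ℤ) := by linarith
      exact_mod_cast this
    have hlt' := Stmt11.cost_lt (fun w => ∑ u : U, P u w)
      (fun w => ((Stmt11.cnt fstar w : ℕ) : ℝ)) (fun w => ((Stmt11.cnt g w : ℕ) : ℝ))
      v w hvw hx hw' ho (by linarith)
    have hmin' := hmin g hgfeas
    simp only [Stmt11.cnt] at hlt'
    linarith
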